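/- In the capacitated b-matching setting, let agents 1 and 2 satisfy c 1 ≥ c 2, let M be a welfare-maximizing allocation and M^{-1} a welfare-maximizing allocation among those whose row 1 is zero. Then there exists an allocation D whose row 2 is identically zero such that v(D) ≥ v(M^{-1}) + Σ_j M 2 j · w 1 j − Σ_j M 2 j · w 2 j. -/

import Mathlib

/-- An allocation in the capacitated `b`-matching setting: agent `i` gets at
most `c i` units in total and at most `q j` units of good `j` are allocated. -/
def IsAlloc {n m : ℕ} (c : Fin n → ℕ) (q : Fin m → ℕ)
    (a : Fin n → Fin m → ℕ) : Prop :=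
  (∀ i, ∑ j, a i j ≤ c i) ∧ (∀ j, ∑ i, a i j ≤ q j)

/-- The value of an allocation: `∑_{i,j} a i j · w i j`. -/
def allocVal {n m : ℕ} (w : Fin n → Fin m → ℝ) (a : Fin n → Fin m → ℕ) : ℝ :=
  ∑ i, ∑ j, (a i j : ℝ) * w i j


namespace BSplit
open Finset

variable {n m : ℕ}

def rsum (X : Fin n → Fin m → ℕ) (i : Fin n) : ℕ := ∑ j, X i j
def csum (X : Fin n → Fin m → ℕ) (j : Fin m) : ℕ := ∑ i, X i j

lemma sum_if_eq {α : Type*} [Fintype α] [DecidableEq α] (f : α → ℕ) (a : α) (v : ℕ) :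
    ∑ x, (if x = a then v else f x) = (∑ x ∈ Finset.univ.erase a, f x) + v := by
  rw [← Finset.sum_erase_add _ _ (mem_univ a)]
  simp only [if_pos rfl]
  congr 1
  apply Finset.sum_congr rfl
  intro x hx
  rw [if_neg (Finset.ne_of_mem_erase hx)]

lemma erase_sum_add {α : Type*} [Fintype α] [DecidableEq α] (f : α → ℕ) (a : α) :
    (∑ x ∈ Finset.univ.erase a, f x) + f a = ∑ x, f x :=
  Finset.sum_erase_add _ _ (mem_univ a)

lemma pick_sub (v : Fin m → ℕ) (s : ℕ) (hs : s ≤ ∑ j, v j) :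
    ∃ u : Fin m → ℕ, (∀ j, u j ≤ v j) ∧ ∑ j, u j = s := by
  induction s with
  | zero => exact ⟨fun _ => 0, fun j => Nat.zero_le _, by simp⟩
  | succ s ih =>
    obtain ⟨u, hu, hsum⟩ := ih (Nat.le_of_succ_le hs)
    have hlt : ∑ j, u j < ∑ j, v j := lt_of_lt_of_le (hsum ▸ Nat.lt_of_succ_le hs) le_rfl
    have : ∃ j, u j < v j := by
      by_contra hcon
      push_neg at hcon
      exact absurd (Finset.sum_le_sum fun j _ => hcon j) (not_le.2 hlt)
    obtain ⟨j, hj⟩ := this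
    refine ⟨fun b => if b = j then u j + 1 else u b, fun b => ?_, ?_⟩
    · by_cases hb : b = j
      · subst hb; simp; omega
      · simp [hb]; exact hu b
    · have h1 := sum_if_eq (fun b => u b) j (u j + 1)
      have h2 := erase_sum_add (fun b => u b) j
      simp only at h1 h2 ⊢
      omega

lemma sum_two {μ : ℕ} (f g : Fin μ → ℕ) (j j' : Fin μ) (hjj' : j ≠ j')
    (hgj : g j + 1 = f j) (hgj' : g j' = f j' + 1)
    (hother : ∀ b, b ≠ j → b ≠ j' → g b = f b) : ∑ b, g b = ∑ b, f b := by
  classical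
  have h2 : j' ∈ Finset.univ.erase j := Finset.mem_erase.2 ⟨Ne.symm hjj', mem_univ _⟩
  have h1 : ∑ b ∈ (Finset.univ.erase j).erase j', g b
      = ∑ b ∈ (Finset.univ.erase j).erase j', f b := by
    apply Finset.sum_congr rfl
    intro b hb
    have hb1 : b ≠ j' := Finset.ne_of_mem_erase hb
    have hb2 : b ≠ j := Finset.ne_of_mem_erase (Finset.mem_of_mem_erase hb)
    exact hother b hb2 hb1
  have h3 := Finset.sum_erase_add (Finset.univ.erase j) g h2
  have h4 := Finset.sum_erase_add (Finset.univ.erase j) f h2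
  have h5 := Finset.sum_erase_add Finset.univ g (mem_univ j)
  have h6 := Finset.sum_erase_add Finset.univ f (mem_univ j)
  omega

lemma sum_head_dec {ν : ℕ} (f g : Fin ν → ℕ) (i₀ : Fin ν)
    (h : ∀ a, g a = f a - if a = i₀ then 1 else 0) (hpos : 0 < f i₀) :
    (∑ a, g a) + 1 = ∑ a, f a := by
  have h1 : ∑ a ∈ Finset.univ.erase i₀, g a = ∑ a ∈ Finset.univ.erase i₀, f a := by
    apply Finset.sum_congr rfl; intro a ha
    rw [h a, if_neg (Finset.ne_of_mem_erase ha), Nat.sub_zero]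
  have h2 := erase_sum_add g i₀
  have h3 := erase_sum_add f i₀
  have h4 : g i₀ = f i₀ - 1 := by rw [h i₀, if_pos rfl]
  omega

lemma sum_head_inc {ν : ℕ} (f g : Fin ν → ℕ) (i₀ : Fin ν)
    (h : ∀ a, g a = f a + if a = i₀ then 1 else 0) :
    ∑ a, g a = (∑ a, f a) + 1 := by
  have h1 : ∑ a ∈ Finset.univ.erase i₀, g a = ∑ a ∈ Finset.univ.erase i₀, f a := by
    apply Finset.sum_congr rfl; intro a ha
    rw [h a, if_neg (Finset.ne_of_mem_erase ha), Nat.add_zero]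
  have h2 := erase_sum_add g i₀
  have h3 := erase_sum_add f i₀
  have h4 : g i₀ = f i₀ + 1 := by rw [h i₀, if_pos rfl]
  omega

/-- move one unit of row `i` from column `j` to column `j'` -/
def swp (Z : Fin n → Fin m → ℕ) (i : Fin n) (j j' : Fin m) : Fin n → Fin m → ℕ :=
  fun a b => if a = i then (if b = j then Z a b - 1 else if b = j' then Z a b + 1 else Z a b)
    else Z a b

lemma swp_ne_row (Z : Fin n → Fin m → ℕ) {i : Fin n} (j j' : Fin m) {a : Fin n} (ha : a ≠ i)
    (b : Fin m) : swp Z i j j' a b = Z a b := by simp [swp, ha]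

lemma swp_j (Z : Fin n → Fin m → ℕ) (i : Fin n) (j j' : Fin m) :
    swp Z i j j' i j = Z i j - 1 := by simp [swp]

lemma swp_j' (Z : Fin n → Fin m → ℕ) (i : Fin n) {j j' : Fin m} (hjj' : j ≠ j') :
    swp Z i j j' i j' = Z i j' + 1 := by
  unfold swp
  rw [if_pos rfl, if_neg (Ne.symm hjj'), if_pos rfl]

lemma swp_other (Z : Fin n → Fin m → ℕ) (i : Fin n) {j j' : Fin m} (a : Fin n) {b : Fin m}
    (hb : b ≠ j) (hb' : b ≠ j') : swp Z i j j' a b = Z a b := by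
  unfold swp
  by_cases ha : a = i
  · rw [if_pos ha, if_neg hb, if_neg hb']
  · rw [if_neg ha]

lemma rsum_swp (Z : Fin n → Fin m → ℕ) (i : Fin n) {j j' : Fin m} (hjj' : j ≠ j')
    (hpos : 0 < Z i j) (a : Fin n) : rsum (swp Z i j j') a = rsum Z a := by
  by_cases ha : a = i
  · subst ha
    apply sum_two (fun b => Z a b) (fun b => swp Z a j j' a b) j j' hjj'
    · rw [swp_j]; omega
    · rw [swp_j' Z a hjj']
    · intro b hb hb'; exact swp_other Z a a hb hb'
  · unfold rsum
    apply Finset.sum_congr rfl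
    intro b _
    exact swp_ne_row Z j j' ha b

lemma csum_swp_j (Z : Fin n → Fin m → ℕ) (i : Fin n) {j j' : Fin m} (hjj' : j ≠ j')
    (hpos : 0 < Z i j) : csum (swp Z i j j') j + 1 = csum Z j := by
  unfold csum
  have h1 : ∑ a, swp Z i j j' a j = ∑ a, (if a = i then Z i j - 1 else Z a j) := by
    apply Finset.sum_congr rfl; intro a _
    by_cases ha : a = i
    · subst ha; rw [swp_j, if_pos rfl]
    · rw [swp_ne_row Z j j' ha, if_neg ha]
  rw [h1, sum_if_eq]
  have h2 := erase_sum_add (fun a => Z a j) i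
  omega

lemma csum_swp_j' (Z : Fin n → Fin m → ℕ) (i : Fin n) {j j' : Fin m} (hjj' : j ≠ j') :
    csum (swp Z i j j') j' = csum Z j' + 1 := by
  unfold csum
  have h1 : ∑ a, swp Z i j j' a j' = ∑ a, (if a = i then Z i j' + 1 else Z a j') := by
    apply Finset.sum_congr rfl; intro a _
    by_cases ha : a = i
    · subst ha; rw [swp_j' Z a hjj', if_pos rfl]
    · rw [swp_ne_row Z j j' ha, if_neg ha]
  rw [h1, sum_if_eq]
  have h2 := erase_sum_add (fun a => Z a j') i
  omega

lemma csum_swp_ne (Z : Fin n → Fin m → ℕ) (i : Fin n) {j j' b : Fin m}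
    (hb : b ≠ j) (hb' : b ≠ j') : csum (swp Z i j j') b = csum Z b := by
  unfold csum
  apply Finset.sum_congr rfl
  intro a _
  exact swp_other Z i a hb hb'

/-- decrease entry (i,j) by one -/
def dec1 (X : Fin n → Fin m → ℕ) (i : Fin n) (j : Fin m) : Fin n → Fin m → ℕ :=
  fun a b => if a = i ∧ b = j then X a b - 1 else X a b

def inc1 (X : Fin n → Fin m → ℕ) (i : Fin n) (j : Fin m) : Fin n → Fin m → ℕ :=
  fun a b => if a = i ∧ b = j then X a b + 1 else X a b

lemma dec1_self (X : Fin n → Fin m → ℕ) (i : Fin n) (j : Fin m) :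
    dec1 X i j i j = X i j - 1 := by simp [dec1]

lemma inc1_self (X : Fin n → Fin m → ℕ) (i : Fin n) (j : Fin m) :
    inc1 X i j i j = X i j + 1 := by simp [inc1]

lemma dec1_ne (X : Fin n → Fin m → ℕ) {i : Fin n} {j : Fin m} {a b}
    (h : ¬(a = i ∧ b = j)) : dec1 X i j a b = X a b := by simp [dec1, h]

lemma inc1_ne (X : Fin n → Fin m → ℕ) {i : Fin n} {j : Fin m} {a b}
    (h : ¬(a = i ∧ b = j)) : inc1 X i j a b = X a b := by simp [inc1, h]

lemma rsum_dec1_self (X : Fin n → Fin m → ℕ) (i : Fin n) (j : Fin m) (h : 0 < X i j) :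
    rsum (dec1 X i j) i + 1 = rsum X i := by
  unfold rsum
  have h1 : ∑ b, dec1 X i j i b = ∑ b, (if b = j then X i j - 1 else X i b) := by
    apply Finset.sum_congr rfl; intro b _
    by_cases hb : b = j
    · subst hb; rw [dec1_self, if_pos rfl]
    · rw [dec1_ne X (by tauto), if_neg hb]
  rw [h1, sum_if_eq]
  have h2 := erase_sum_add (fun b => X i b) j
  omega

lemma rsum_dec1_ne (X : Fin n → Fin m → ℕ) (i : Fin n) (j : Fin m) {a : Fin n} (h : a ≠ i) :
    rsum (dec1 X i j) a = rsum X a := by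
  unfold rsum; apply Finset.sum_congr rfl; intro b _; exact dec1_ne X (by tauto)

lemma rsum_inc1_self (X : Fin n → Fin m → ℕ) (i : Fin n) (j : Fin m) :
    rsum (inc1 X i j) i = rsum X i + 1 := by
  unfold rsum
  have h1 : ∑ b, inc1 X i j i b = ∑ b, (if b = j then X i j + 1 else X i b) := by
    apply Finset.sum_congr rfl; intro b _
    by_cases hb : b = j
    · subst hb; rw [inc1_self, if_pos rfl]
    · rw [inc1_ne X (by tauto), if_neg hb]
  rw [h1, sum_if_eq]
  have h2 := erase_sum_add (fun b => X i b) j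
  omega

lemma rsum_inc1_ne (X : Fin n → Fin m → ℕ) (i : Fin n) (j : Fin m) {a : Fin n} (h : a ≠ i) :
    rsum (inc1 X i j) a = rsum X a := by
  unfold rsum; apply Finset.sum_congr rfl; intro b _; exact inc1_ne X (by tauto)

lemma csum_dec1_self (X : Fin n → Fin m → ℕ) (i : Fin n) (j : Fin m) (h : 0 < X i j) :
    csum (dec1 X i j) j + 1 = csum X j := by
  unfold csum
  have h1 : ∑ a, dec1 X i j a j = ∑ a, (if a = i then X i j - 1 else X a j) := by
    apply Finset.sum_congr rfl; intro a _
    by_cases ha : a = i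
    · subst ha; rw [dec1_self, if_pos rfl]
    · rw [dec1_ne X (by tauto), if_neg ha]
  rw [h1, sum_if_eq]
  have h2 := erase_sum_add (fun a => X a j) i
  omega

lemma csum_dec1_ne (X : Fin n → Fin m → ℕ) (i : Fin n) (j : Fin m) {b : Fin m} (h : b ≠ j) :
    csum (dec1 X i j) b = csum X b := by
  unfold csum; apply Finset.sum_congr rfl; intro a _; exact dec1_ne X (by tauto)

lemma csum_inc1_self (X : Fin n → Fin m → ℕ) (i : Fin n) (j : Fin m) :
    csum (inc1 X i j) j = csum X j + 1 := by
  unfold csum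
  have h1 : ∑ a, inc1 X i j a j = ∑ a, (if a = i then X i j + 1 else X a j) := by
    apply Finset.sum_congr rfl; intro a _
    by_cases ha : a = i
    · subst ha; rw [inc1_self, if_pos rfl]
    · rw [inc1_ne X (by tauto), if_neg ha]
  rw [h1, sum_if_eq]
  have h2 := erase_sum_add (fun a => X a j) i
  omega

lemma csum_inc1_ne (X : Fin n → Fin m → ℕ) (i : Fin n) (j : Fin m) {b : Fin m} (h : b ≠ j) :
    csum (inc1 X i j) b = csum X b := by
  unfold csum; apply Finset.sum_congr rfl; intro a _; exact inc1_ne X (by tauto)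

section Walk

variable (c : Fin n → ℕ) (q : Fin m → ℕ) (i₂ : Fin n)

inductive AP (X Y : Fin n → Fin m → ℕ) : Fin m → List (Fin m) → Prop
  | half (j : Fin m) (i : Fin n) (hi : i ≠ i₂) (hX : 0 < X i j) (hY : rsum Y i < c i) :
      AP X Y j []
  | swap (j j' : Fin m) (i : Fin n) (hi : i ≠ i₂) (hX : 0 < X i j) (hYr : rsum Y i = c i)
      (hY : 0 < Y i j') (hq : csum X j' < q j') : AP X Y j [j']
  | cons (j j' : Fin m) (l : List (Fin m)) (i : Fin n) (hi : i ≠ i₂) (hX : 0 < X i j)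
      (hYr : rsum Y i = c i) (hY : 0 < Y i j') (hAP : AP X Y j' l) : AP X Y j (j' :: l)

theorem walk {X Y : Fin n → Fin m → ℕ} {h : Fin m} {l : List (Fin m)}
    (ap : AP c q i₂ X Y h l)
    (hXr : ∀ i, rsum X i ≤ c i) (hYr : ∀ i, rsum Y i ≤ c i) :
    (h :: l).Nodup →
    ∃ X' Y' i₀,
      (∀ a b, X' a b + Y' a b = X a b + Y a b) ∧
      (∀ a, rsum X' a ≤ c a) ∧ (∀ a, rsum Y' a ≤ c a) ∧
      (∀ b, X' i₂ b = X i₂ b) ∧ (∀ b, Y' i₂ b = Y i₂ b) ∧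
      i₀ ≠ i₂ ∧ 0 < X i₀ h ∧
      (∀ a, X' a h = X a h - (if a = i₀ then 1 else 0)) ∧
      (∀ a, Y' a h = Y a h + (if a = i₀ then 1 else 0)) ∧
      (∀ b, b ≠ h → b ∉ l → ∀ a, X' a b = X a b ∧ Y' a b = Y a b) ∧
      (∀ b ∈ l, csum X' b ≤ max (csum X b) (q b) ∧ csum Y' b ≤ max (csum Y b) (q b)) := by
  induction ap with
  | half j i hi hX hY =>
    intro _
    refine ⟨dec1 X i j, inc1 Y i j, i, ?_, ?_, ?_, ?_, ?_, hi, hX, ?_, ?_, ?_, by simp⟩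
    · intro a b
      by_cases hab : a = i ∧ b = j
      · obtain ⟨ha, hb⟩ := hab; subst ha; subst hb
        rw [dec1_self, inc1_self]; omega
      · rw [dec1_ne X hab, inc1_ne Y hab]
    · intro a
      by_cases ha : a = i
      · subst ha
        have h1 := rsum_dec1_self X a j hX
        have := hXr a; omega
      · rw [rsum_dec1_ne X i j ha]; exact hXr a
    · intro a
      by_cases ha : a = i
      · subst ha; rw [rsum_inc1_self]; omega
      · rw [rsum_inc1_ne Y i j ha]; exact hYr a
    · intro b; exact dec1_ne X (by tauto)
    · intro b; exact inc1_ne Y (by tauto)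
    · intro a
      by_cases ha : a = i
      · subst ha; rw [dec1_self, if_pos rfl]
      · rw [dec1_ne X (by tauto), if_neg ha, Nat.sub_zero]
    · intro a
      by_cases ha : a = i
      · subst ha; rw [inc1_self, if_pos rfl]
      · rw [inc1_ne Y (by tauto), if_neg ha, Nat.add_zero]
    · intro b hb _ a
      exact ⟨dec1_ne X (by tauto), inc1_ne Y (by tauto)⟩
  | swap j j' i hi hX hYrr hY hq =>
    intro nd
    have hjj' : j ≠ j' := by
      simp only [List.nodup_cons, List.mem_singleton] at nd; exact nd.1
    refine ⟨swp X i j j', swp Y i j' j, i, ?_, ?_, ?_, ?_, ?_, hi, hX, ?_, ?_, ?_, ?_⟩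
    · intro a b
      by_cases ha : a = i
      · subst ha
        by_cases hb : b = j
        · subst hb
          rw [swp_j, swp_j' Y a (show j' ≠ b from Ne.symm hjj')]; omega
        · by_cases hb' : b = j'
          · subst hb'
            rw [swp_j' X a hjj', swp_j]; omega
          · rw [swp_other X a a hb hb', swp_other Y a a hb' hb]
      · rw [swp_ne_row X j j' ha, swp_ne_row Y j' j ha]
    · intro a; rw [rsum_swp X i hjj' hX a]; exact hXr a
    · intro a; rw [rsum_swp Y i (Ne.symm hjj') hY a]; exact hYr a
    · intro b; exact swp_ne_row X j j' (Ne.symm hi) b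
    · intro b; exact swp_ne_row Y j' j (Ne.symm hi) b
    · intro a
      by_cases ha : a = i
      · subst ha; rw [swp_j, if_pos rfl]
      · rw [swp_ne_row X j j' ha, if_neg ha, Nat.sub_zero]
    · intro a
      by_cases ha : a = i
      · subst ha; rw [swp_j' Y a (show j' ≠ j from Ne.symm hjj'), if_pos rfl]
      · rw [swp_ne_row Y j' j ha, if_neg ha, Nat.add_zero]
    · intro b hb1 hb2 a
      have hb3 : b ≠ j' := by simpa using hb2
      exact ⟨swp_other X i a hb1 hb3, swp_other Y i a hb3 hb1⟩
    · intro b hb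
      simp only [List.mem_singleton] at hb; subst hb
      constructor
      · rw [csum_swp_j' X i hjj']
        have : csum X b + 1 ≤ q b := hq
        exact le_trans this (le_max_right _ _)
      · have h1 := csum_swp_j Y i (Ne.symm hjj') hY
        have : csum (swp Y i b j) b ≤ csum Y b := by omega
        exact le_trans this (le_max_left _ _)
  | cons j j' l i hi hX hYrr hY hAP ih =>
    intro nd
    have hjj' : j ≠ j' := by
      simp only [List.nodup_cons, List.mem_cons] at nd; tauto
    have hjl : j ∉ l := by
      simp only [List.nodup_cons, List.mem_cons] at nd; tauto
    have hj'l : j' ∉ l := by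
      simp only [List.nodup_cons] at nd
      exact nd.2.1
    have nd' : (j' :: l).Nodup := by
      simp only [List.nodup_cons] at nd ⊢; tauto
    obtain ⟨X₁, Y₁, i₁, hsum₁, hXr₁, hYr₁, hXi₂₁, hYi₂₁, hi₁, hXpos₁, hXh₁, hYh₁, hun₁, htl₁⟩ :=
      ih nd'
    have hX₁ij : X₁ i j = X i j := (hun₁ j hjj' hjl i).1
    have hX₁pos : 0 < X₁ i j := hX₁ij ▸ hX
    have hY₁pos : 0 < Y₁ i j' := by
      have h1 := hYh₁ i
      omega
    refine ⟨swp X₁ i j j', swp Y₁ i j' j, i, ?_, ?_, ?_, ?_, ?_, hi, hX, ?_, ?_, ?_, ?_⟩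
    · intro a b
      by_cases ha : a = i
      · subst ha
        by_cases hb : b = j
        · subst hb
          rw [swp_j, swp_j' Y₁ a (show j' ≠ b from Ne.symm hjj')]
          have := hsum₁ a b
          omega
        · by_cases hb' : b = j'
          · subst hb'
            rw [swp_j' X₁ a hjj', swp_j]
            have := hsum₁ a b
            omega
          · rw [swp_other X₁ a a hb hb', swp_other Y₁ a a hb' hb]
            exact hsum₁ a b
      · rw [swp_ne_row X₁ j j' ha, swp_ne_row Y₁ j' j ha]
        exact hsum₁ a b
    · intro a; rw [rsum_swp X₁ i hjj' hX₁pos a]; exact hXr₁ a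
    · intro a; rw [rsum_swp Y₁ i (Ne.symm hjj') hY₁pos a]; exact hYr₁ a
    · intro b; rw [swp_ne_row X₁ j j' (Ne.symm hi) b]; exact hXi₂₁ b
    · intro b; rw [swp_ne_row Y₁ j' j (Ne.symm hi) b]; exact hYi₂₁ b
    · intro a
      have hXa : X₁ a j = X a j := (hun₁ j hjj' hjl a).1
      by_cases ha : a = i
      · subst ha; rw [swp_j, hXa, if_pos rfl]
      · rw [swp_ne_row X₁ j j' ha, hXa, if_neg ha, Nat.sub_zero]
    · intro a
      have hYa : Y₁ a j = Y a j := (hun₁ j hjj' hjl a).2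
      by_cases ha : a = i
      · subst ha; rw [swp_j' Y₁ a (show j' ≠ j from Ne.symm hjj'), hYa, if_pos rfl]
      · rw [swp_ne_row Y₁ j' j ha, hYa, if_neg ha, Nat.add_zero]
    · intro b hb1 hb2 a
      have hb3 : b ≠ j' := by simp only [List.mem_cons] at hb2; tauto
      have hb4 : b ∉ l := by simp only [List.mem_cons] at hb2; tauto
      have huna := hun₁ b hb3 hb4 a
      exact ⟨by rw [swp_other X₁ i a hb1 hb3]; exact huna.1,
        by rw [swp_other Y₁ i a hb3 hb1]; exact huna.2⟩
    · intro b hb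
      rcases List.mem_cons.1 hb with hb | hb
      · subst hb
        constructor
        · rw [csum_swp_j' X₁ i hjj']
          have h2 : csum X₁ b + 1 = csum X b := by
            apply sum_head_dec (fun a => X a b) (fun a => X₁ a b) i₁ (fun a => hXh₁ a) hXpos₁
          rw [h2]
          exact le_max_left _ _
        · have h1 := csum_swp_j Y₁ i (Ne.symm hjj') hY₁pos
          have h2 : csum Y₁ b = csum Y b + 1 := by
            apply sum_head_inc (fun a => Y a b) (fun a => Y₁ a b) i₁ (fun a => hYh₁ a)
          have : csum (swp Y₁ i b j) b ≤ csum Y b := by omega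
          exact le_trans this (le_max_left _ _)
      · have hb3 : b ≠ j := fun hh => hjl (hh ▸ hb)
        have hb4 : b ≠ j' := fun hh => hj'l (hh ▸ hb)
        rw [csum_swp_ne X₁ i hb3 hb4, csum_swp_ne Y₁ i hb4 hb3]
        exact htl₁ b hb


def Phi (X Y : Fin n → Fin m → ℕ) : ℕ := ∑ j, ((csum X j - q j) + (csum Y j - q j))

def stepR' (c : Fin n → ℕ) (i₂ : Fin n) (X Y : Fin n → Fin m → ℕ) (j j' : Fin m) : Prop :=
  ∃ i, i ≠ i₂ ∧ 0 < X i j ∧ rsum Y i = c i ∧ 0 < Y i j'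

def reachN' (c : Fin n → ℕ) (i₂ : Fin n) (X Y : Fin n → Fin m → ℕ) (j₀ : Fin m) :
    ℕ → Fin m → Prop
  | 0, j => j = j₀
  | (k+1), j => ∃ j', reachN' c i₂ X Y j₀ k j' ∧ stepR' c i₂ X Y j' j

theorem aug {H X Y : Fin n → Fin m → ℕ}
    (hsum : ∀ i j, X i j + Y i j = H i j)
    (hXr : ∀ i, rsum X i ≤ c i) (hYr : ∀ i, rsum Y i ≤ c i)
    (hHcol : ∀ j, csum H j ≤ q j + q j)
    {j₀ : Fin m} (hover : q j₀ < csum X j₀)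
    (hstuck : ∀ C : Finset (Fin m), j₀ ∈ C → (∀ j ∈ C, q j ≤ csum X j) →
      (∀ j ∈ C, ∀ i, i ≠ i₂ → 0 < X i j → rsum Y i = c i ∧ ∀ j', 0 < Y i j' → j' ∈ C) →
      False) :
    ∃ X' Y', (∀ i j, X' i j + Y' i j = H i j) ∧
      (∀ i, rsum X' i ≤ c i) ∧ (∀ i, rsum Y' i ≤ c i) ∧
      (∀ j, X' i₂ j = X i₂ j) ∧ (∀ j, Y' i₂ j = Y i₂ j) ∧
      Phi q X' Y' < Phi q X Y := by
  classical
  have hcolsum : ∀ j, csum X j + csum Y j = csum H j := by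
    intro j
    unfold csum
    rw [← Finset.sum_add_distrib]
    exact Finset.sum_congr rfl fun i _ => hsum i j
  by_cases hT : ∃ k j, reachN' c i₂ X Y j₀ k j ∧
      (csum X j < q j ∨ ∃ i, i ≠ i₂ ∧ 0 < X i j ∧ rsum Y i < c i)
  case neg =>
    exfalso
    apply hstuck (Finset.univ.filter (fun j => ∃ k, reachN' c i₂ X Y j₀ k j))
    · exact Finset.mem_filter.2 ⟨mem_univ _, 0, rfl⟩
    · intro j hj
      obtain ⟨k, hk⟩ := (Finset.mem_filter.1 hj).2
      by_contra hlt
      exact hT ⟨k, j, hk, Or.inl (not_le.1 hlt)⟩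
    · intro j hj i hi hXij
      obtain ⟨k, hk⟩ := (Finset.mem_filter.1 hj).2
      have hYri : rsum Y i = c i := by
        rcases lt_or_ge (rsum Y i) (c i) with hlt | hge
        · exact absurd ⟨k, j, hk, Or.inr ⟨i, hi, hXij, hlt⟩⟩ hT
        · exact le_antisymm (hYr i) hge
      refine ⟨hYri, fun j' hYij' => ?_⟩
      exact Finset.mem_filter.2 ⟨mem_univ _, k + 1, j, hk, ⟨i, hi, hXij, hYri, hYij'⟩⟩
  case pos =>
    obtain ⟨nstar, jstar, hjreach, hjterm, hmin⟩ :
        ∃ ns js, reachN' c i₂ X Y j₀ ns js ∧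
          (csum X js < q js ∨ ∃ i, i ≠ i₂ ∧ 0 < X i js ∧ rsum Y i < c i) ∧
          (∀ k, k < ns → ¬∃ j, reachN' c i₂ X Y j₀ k j ∧
            (csum X j < q j ∨ ∃ i, i ≠ i₂ ∧ 0 < X i j ∧ rsum Y i < c i)) := by
      have hT' : ∃ k, ∃ j, reachN' c i₂ X Y j₀ k j ∧
          (csum X j < q j ∨ ∃ i, i ≠ i₂ ∧ 0 < X i j ∧ rsum Y i < c i) := hT
      obtain ⟨js, h1, h2⟩ := Nat.find_spec hT'
      exact ⟨Nat.find hT', js, h1, h2, fun k hk => Nat.find_min hT' hk⟩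
    set md : Fin m → ℕ := fun y => sInf {k | reachN' c i₂ X Y j₀ k y} with hmd
    have mdspec : ∀ y, (∃ k, reachN' c i₂ X Y j₀ k y) → reachN' c i₂ X Y j₀ (md y) y := by
      intro y h
      exact Nat.sInf_mem h
    have mdle : ∀ y k, reachN' c i₂ X Y j₀ k y → md y ≤ k := by
      intro y k hk
      exact Nat.sInf_le hk
    have mdpred : ∀ y k, (∃ kk, reachN' c i₂ X Y j₀ kk y) → md y = k + 1 →
        ∃ y', (∃ kk, reachN' c i₂ X Y j₀ kk y') ∧ md y' = k ∧ stepR' c i₂ X Y y' y := by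
      intro y k hy hmdy
      have h1 : reachN' c i₂ X Y j₀ (k+1) y := by rw [← hmdy]; exact mdspec y hy
      obtain ⟨y', hy', hstep⟩ := h1
      have h2 : md y' ≤ k := mdle y' k hy'
      have h3 : md y ≤ md y' + 1 := by
        apply mdle
        exact ⟨y', mdspec y' ⟨k, hy'⟩, hstep⟩
      exact ⟨y', ⟨k, hy'⟩, by omega, hstep⟩
    have build : ∀ k (y : Fin m) (l : List (Fin m)),
        (∃ kk, reachN' c i₂ X Y j₀ kk y) → md y = k → AP c q i₂ X Y y l →
        ((y :: l).Pairwise (fun a b => md a < md b)) →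
        ∃ l', AP c q i₂ X Y j₀ l' ∧ (j₀ :: l').Nodup := by
      intro k
      induction k with
      | zero =>
        intro y l hy hmdy ap pw
        have h0 : reachN' c i₂ X Y j₀ 0 y := by rw [← hmdy]; exact mdspec y hy
        have : y = j₀ := h0
        subst this
        refine ⟨l, ap, ?_⟩
        exact pw.imp (fun hab => by intro he; subst he; exact lt_irrefl _ hab)
      | succ k ih =>
        intro y l hy hmdy ap pw
        obtain ⟨y', hy', hmdy', hstep⟩ := mdpred y k hy hmdy
        obtain ⟨i, hi, hXp, hYrr, hYp⟩ := hstep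
        have ap' : AP c q i₂ X Y y' (y :: l) := AP.cons y' y l i hi hXp hYrr hYp ap
        have pw' : ((y' :: y :: l).Pairwise (fun a b => md a < md b)) := by
          rw [List.pairwise_cons]
          refine ⟨?_, pw⟩
          intro x hx
          rcases List.mem_cons.1 hx with hx | hx
          · subst hx; omega
          · have := (List.pairwise_cons.1 pw).1 x hx
            omega
        exact ih y' (y :: l) hy' hmdy' ap' pw'
    have hmdjstar : md jstar = nstar := by
      have h1 : md jstar ≤ nstar := mdle jstar nstar hjreach
      rcases lt_or_eq_of_le h1 with h2 | h2
      · exact absurd ⟨jstar, mdspec jstar ⟨nstar, hjreach⟩, hjterm⟩ (hmin (md jstar) h2)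
      · exact h2
    have hpath : ∃ l', AP c q i₂ X Y j₀ l' ∧ (j₀ :: l').Nodup := by
      rcases hjterm with hq' | ⟨i, hi, hXp, hYlt⟩
      · have hns : nstar ≠ 0 := by
          intro h0
          rw [h0] at hjreach
          have : jstar = j₀ := hjreach
          subst this
          omega
        obtain ⟨k, hk⟩ : ∃ k, nstar = k + 1 := ⟨nstar - 1, by omega⟩
        obtain ⟨y', hy', hmdy', hstep⟩ := mdpred jstar k ⟨nstar, hjreach⟩ (by omega)
        obtain ⟨i, hi, hXp, hYrr, hYp⟩ := hstep
        have ap0 : AP c q i₂ X Y y' [jstar] := AP.swap y' jstar i hi hXp hYrr hYp hq'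
        apply build k y' [jstar] hy' hmdy' ap0
        rw [List.pairwise_cons]
        refine ⟨?_, List.pairwise_singleton _ _⟩
        intro x hx
        rw [List.mem_singleton] at hx
        subst hx
        omega
      · have ap0 : AP c q i₂ X Y jstar [] := AP.half jstar i hi hXp hYlt
        apply build nstar jstar [] ⟨nstar, hjreach⟩ hmdjstar ap0
        exact List.pairwise_singleton _ _
    obtain ⟨l', ap', nd'⟩ := hpath
    obtain ⟨X', Y', i₀, hsum', hXr', hYr', hXi₂', hYi₂', hi₀, hXpos₀, hXh', hYh', hun', htl'⟩ :=
      walk c q i₂ ap' hXr hYr nd'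
    have hcXj₀ : csum X' j₀ + 1 = csum X j₀ :=
      sum_head_dec (fun a => X a j₀) (fun a => X' a j₀) i₀ (fun a => hXh' a) hXpos₀
    have hcYj₀ : csum Y' j₀ = csum Y j₀ + 1 :=
      sum_head_inc (fun a => Y a j₀) (fun a => Y' a j₀) i₀ (fun a => hYh' a)
    have hYj₀lt : csum Y j₀ < q j₀ := by
      have := hcolsum j₀
      have := hHcol j₀
      omega
    refine ⟨X', Y', ?_, hXr', hYr', hXi₂', hYi₂', ?_⟩
    · intro i j
      rw [hsum' i j]; exact hsum i j
    · unfold Phi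
      apply Finset.sum_lt_sum
      · intro j _
        by_cases hj : j = j₀
        · subst hj; omega
        · by_cases hjl : j ∈ l'
          · have := htl' j hjl
            rcases this with ⟨h1, h2⟩
            rw [max_def] at h1 h2
            split_ifs at h1 h2 <;> omega
          · have hXeq : csum X' j = csum X j := by
              unfold csum
              exact Finset.sum_congr rfl fun a _ => (hun' j hj hjl a).1
            have hYeq : csum Y' j = csum Y j := by
              unfold csum
              exact Finset.sum_congr rfl fun a _ => (hun' j hj hjl a).2
            omega
      · exact ⟨j₀, mem_univ _, by omega⟩


theorem stuckD {A B D E : Fin n → Fin m → ℕ}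
    (hsum : ∀ i j, D i j + E i j = A i j + B i j)
    (hAcol : ∀ j, csum A j ≤ q j)
    (hBrow : ∀ i, rsum B i ≤ c i)
    (hDi₂ : ∀ j, D i₂ j = 0)
    {j₀ : Fin m} (hover : q j₀ < csum D j₀)
    (C : Finset (Fin m)) (hj₀ : j₀ ∈ C)
    (hCq : ∀ j ∈ C, q j ≤ csum D j)
    (hCrow : ∀ j ∈ C, ∀ i, i ≠ i₂ → 0 < D i j → rsum E i = c i ∧ ∀ j', 0 < E i j' → j' ∈ C) :
    False := by
  classical
  have key : ∀ i, (∑ j ∈ C, B i j) ≤ ∑ j ∈ C, E i j := by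
    intro i
    by_cases hi : i = i₂
    · subst hi
      apply Finset.sum_le_sum
      intro j _
      have h1 := hsum i j
      have h2 := hDi₂ j
      omega
    · by_cases hR : ∃ j ∈ C, 0 < D i j
      · obtain ⟨j, hjC, hD⟩ := hR
        obtain ⟨hErow, hEsupp⟩ := hCrow j hjC i hi hD
        have h1 : ∑ j ∈ C, E i j = rsum E i := by
          unfold rsum
          exact Finset.sum_subset (Finset.subset_univ C) (fun x _ hx => by
            by_contra hzero
            exact hx (hEsupp x (Nat.pos_of_ne_zero hzero)))
        rw [h1, hErow]
        exact le_trans (Finset.sum_le_sum_of_subset (Finset.subset_univ C)) (hBrow i)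
      · push_neg at hR
        apply Finset.sum_le_sum
        intro j hj
        have h1 := hsum i j
        have h2 := hR j hj
        omega
  have h1 : ∑ j ∈ C, csum A j < ∑ j ∈ C, csum D j :=
    Finset.sum_lt_sum (fun j hj => le_trans (hAcol j) (hCq j hj))
      ⟨j₀, hj₀, lt_of_le_of_lt (hAcol j₀) hover⟩
  have h2 : ∀ j, csum D j + csum E j = csum A j + csum B j := by
    intro j
    unfold csum
    rw [← Finset.sum_add_distrib, ← Finset.sum_add_distrib]
    exact Finset.sum_congr rfl fun i _ => hsum i j
  have h3 : ∑ j ∈ C, csum B j ≤ ∑ j ∈ C, csum E j := by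
    have hB : ∑ j ∈ C, csum B j = ∑ i, ∑ j ∈ C, B i j := by
      unfold csum; exact Finset.sum_comm
    have hE : ∑ j ∈ C, csum E j = ∑ i, ∑ j ∈ C, E i j := by
      unfold csum; exact Finset.sum_comm
    rw [hB, hE]
    exact Finset.sum_le_sum fun i _ => key i
  have h4 : ∑ j ∈ C, (csum D j + csum E j) = ∑ j ∈ C, (csum A j + csum B j) :=
    Finset.sum_congr rfl fun j _ => h2 j
  rw [Finset.sum_add_distrib, Finset.sum_add_distrib] at h4
  omega

theorem stuckE (i₁ : Fin n) (h12 : i₁ ≠ i₂) (hcc : c i₂ ≤ c i₁)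
    {A B D E : Fin n → Fin m → ℕ}
    (hsum : ∀ i j, D i j + E i j = A i j + B i j)
    (hAcol : ∀ j, csum A j ≤ q j) (hArow : ∀ i, i ≠ i₁ → rsum A i ≤ c i)
    (hAi₂ : ∀ j, A i₂ j = 0)
    (hBcol : ∀ j, csum B j ≤ q j) (hBrow : ∀ i, rsum B i ≤ c i)
    (hBi₁ : ∀ j, B i₁ j = 0)
    (hDi₂ : ∀ j, D i₂ j = 0)
    {j₀ : Fin m} (hover : q j₀ < csum E j₀)
    (C : Finset (Fin m)) (hj₀ : j₀ ∈ C)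
    (hCq : ∀ j ∈ C, q j ≤ csum E j)
    (hCrow : ∀ j ∈ C, ∀ i, i ≠ i₂ → 0 < E i j → rsum D i = c i ∧ ∀ j', 0 < D i j' → j' ∈ C) :
    False := by
  classical
  have h2 : ∀ j, csum D j + csum E j = csum A j + csum B j := by
    intro j
    unfold csum
    rw [← Finset.sum_add_distrib, ← Finset.sum_add_distrib]
    exact Finset.sum_congr rfl fun i _ => hsum i j
  have h4 : ∑ j ∈ C, (csum D j + csum E j) = ∑ j ∈ C, (csum A j + csum B j) :=
    Finset.sum_congr rfl fun j _ => h2 j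
  rw [Finset.sum_add_distrib, Finset.sum_add_distrib] at h4
  have hDcomm : ∑ j ∈ C, csum D j = ∑ i, ∑ j ∈ C, D i j := by
    unfold csum; exact Finset.sum_comm
  have hBcomm : ∑ j ∈ C, csum B j = ∑ i, ∑ j ∈ C, B i j := by
    unfold csum; exact Finset.sum_comm
  have hAcomm : ∑ j ∈ C, csum A j = ∑ i, ∑ j ∈ C, A i j := by
    unfold csum; exact Finset.sum_comm
  by_cases hR1 : ∃ j ∈ C, 0 < E i₁ j
  · -- agent i₁ carries E-mass inside C : compare B with D
    obtain ⟨j₁, hj₁C, hE₁⟩ := hR1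
    obtain ⟨hD1row, hD1supp⟩ := hCrow j₁ hj₁C i₁ h12 hE₁
    have hgD1 : ∑ j ∈ C, D i₁ j = c i₁ := by
      rw [← hD1row]
      unfold rsum
      exact Finset.sum_subset (Finset.subset_univ C) (fun x _ hx => by
        by_contra hzero
        exact hx (hD1supp x (Nat.pos_of_ne_zero hzero)))
    have key2 : ∀ i ∈ Finset.univ.erase i₁,
        (∑ j ∈ C, B i j) ≤ (∑ j ∈ C, D i j) + (if i = i₂ then c i₂ else 0) := by
      intro i hi'
      have hii₁ : i ≠ i₁ := Finset.ne_of_mem_erase hi'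
      by_cases hi : i = i₂
      · subst hi
        rw [if_pos rfl]
        have hb1 : ∑ j ∈ C, B i j ≤ rsum B i :=
          Finset.sum_le_sum_of_subset (Finset.subset_univ C)
        have hb2 := hBrow i
        omega
      · rw [if_neg hi, Nat.add_zero]
        by_cases hR : ∃ j ∈ C, 0 < E i j
        · obtain ⟨j, hjC, hE⟩ := hR
          obtain ⟨hDrow, hDsupp⟩ := hCrow j hjC i hi hE
          have h1 : ∑ j ∈ C, D i j = rsum D i := by
            unfold rsum
            exact Finset.sum_subset (Finset.subset_univ C) (fun x _ hx => by
              by_contra hzero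
              exact hx (hDsupp x (Nat.pos_of_ne_zero hzero)))
          rw [h1, hDrow]
          exact le_trans (Finset.sum_le_sum_of_subset (Finset.subset_univ C)) (hBrow i)
        · push_neg at hR
          apply Finset.sum_le_sum
          intro j hj
          have ha := hsum i j
          have hb := hR j hj
          omega
    have hsum_erase : (∑ i ∈ Finset.univ.erase i₁, ∑ j ∈ C, B i j)
        ≤ (∑ i ∈ Finset.univ.erase i₁, ∑ j ∈ C, D i j) + c i₂ := by
      calc (∑ i ∈ Finset.univ.erase i₁, ∑ j ∈ C, B i j)
          ≤ ∑ i ∈ Finset.univ.erase i₁, ((∑ j ∈ C, D i j) + (if i = i₂ then c i₂ else 0)) :=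
            Finset.sum_le_sum key2
        _ = (∑ i ∈ Finset.univ.erase i₁, ∑ j ∈ C, D i j)
            + ∑ i ∈ Finset.univ.erase i₁, (if i = i₂ then c i₂ else 0) :=
            Finset.sum_add_distrib
        _ = (∑ i ∈ Finset.univ.erase i₁, ∑ j ∈ C, D i j) + c i₂ := by
            congr 1
            rw [Finset.sum_ite_eq' (Finset.univ.erase i₁) i₂ (fun _ => c i₂)]
            rw [if_pos (Finset.mem_erase.2 ⟨Ne.symm h12, mem_univ _⟩)]
    have hB1zero : ∑ j ∈ C, B i₁ j = 0 :=
      Finset.sum_eq_zero fun j _ => hBi₁ j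
    have hBtot := erase_sum_add (fun i => ∑ j ∈ C, B i j) i₁
    have hDtot := erase_sum_add (fun i => ∑ j ∈ C, D i j) i₁
    have h1 : ∑ j ∈ C, csum A j < ∑ j ∈ C, csum E j :=
      Finset.sum_lt_sum (fun j hj => le_trans (hAcol j) (hCq j hj))
        ⟨j₀, hj₀, lt_of_le_of_lt (hAcol j₀) hover⟩
    omega
  · -- agent i₁ has no E-mass inside C : compare A with D
    push_neg at hR1
    have key : ∀ i, (∑ j ∈ C, A i j) ≤ ∑ j ∈ C, D i j := by
      intro i
      by_cases hi : i = i₂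
      · subst hi
        have : ∑ j ∈ C, A i j = 0 := Finset.sum_eq_zero fun j _ => hAi₂ j
        omega
      · by_cases hR : ∃ j ∈ C, 0 < E i j
        · obtain ⟨j, hjC, hE⟩ := hR
          have hii₁ : i ≠ i₁ := by
            intro h
            subst h
            exact absurd hE (by have := hR1 j hjC; omega)
          obtain ⟨hDrow, hDsupp⟩ := hCrow j hjC i hi hE
          have h1 : ∑ j ∈ C, D i j = rsum D i := by
            unfold rsum
            exact Finset.sum_subset (Finset.subset_univ C) (fun x _ hx => by
              by_contra hzero
              exact hx (hDsupp x (Nat.pos_of_ne_zero hzero)))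
          rw [h1, hDrow]
          exact le_trans (Finset.sum_le_sum_of_subset (Finset.subset_univ C))
            (hArow i hii₁)
        · push_neg at hR
          apply Finset.sum_le_sum
          intro j hj
          have ha := hsum i j
          have hb := hR j hj
          omega
    have h1 : ∑ j ∈ C, csum B j < ∑ j ∈ C, csum E j :=
      Finset.sum_lt_sum (fun j hj => le_trans (hBcol j) (hCq j hj))
        ⟨j₀, hj₀, lt_of_le_of_lt (hBcol j₀) hover⟩
    have h3 : ∑ j ∈ C, csum A j ≤ ∑ j ∈ C, csum D j := by
      rw [hAcomm, hDcomm]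
      exact Finset.sum_le_sum fun i _ => key i
    omega


theorem phi_comm (X Y : Fin n → Fin m → ℕ) : Phi q X Y = Phi q Y X := by
  unfold Phi
  exact Finset.sum_congr rfl fun j _ => by omega

theorem split (i₁ : Fin n) (h12 : i₁ ≠ i₂) (hcc : c i₂ ≤ c i₁)
    (A B : Fin n → Fin m → ℕ)
    (hArow : ∀ i, i ≠ i₁ → rsum A i ≤ c i) (hArow1 : rsum A i₁ ≤ c i₁ + c i₂)
    (hAi₂ : ∀ j, A i₂ j = 0) (hAcol : ∀ j, csum A j ≤ q j)
    (hBrow : ∀ i, rsum B i ≤ c i) (hBi₁ : ∀ j, B i₁ j = 0) (hBcol : ∀ j, csum B j ≤ q j) :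
    ∃ D E, (∀ i j, D i j + E i j = A i j + B i j) ∧ (∀ j, D i₂ j = 0) ∧
      (∀ i, rsum D i ≤ c i) ∧ (∀ j, csum D j ≤ q j) ∧
      (∀ i, rsum E i ≤ c i) ∧ (∀ j, csum E j ≤ q j) := by
  classical
  set H : Fin n → Fin m → ℕ := fun i j => A i j + B i j with hH
  have hHrow : ∀ i, rsum H i = rsum A i + rsum B i := by
    intro i; unfold rsum; rw [← Finset.sum_add_distrib]
  have hHcol : ∀ j, csum H j ≤ q j + q j := by
    intro j
    have : csum H j = csum A j + csum B j := by
      unfold csum; rw [← Finset.sum_add_distrib]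
    rw [this]
    exact Nat.add_le_add (hAcol j) (hBcol j)
  have hHrow2 : ∀ i, rsum H i ≤ c i + c i := by
    intro i
    rw [hHrow i]
    by_cases hi : i = i₁
    · subst hi
      have hB0 : rsum B i = 0 := Finset.sum_eq_zero fun j _ => hBi₁ j
      have := hArow1
      omega
    · have := hArow i hi
      have := hBrow i
      omega
  -- initial state
  have hchoice : ∀ i, ∃ u : Fin m → ℕ, (∀ j, u j ≤ H i j) ∧
      ∑ j, u j = min (c i) (rsum H i) := fun i =>
    pick_sub (H i) (min (c i) (rsum H i)) (min_le_right _ _)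
  choose u hu1 hu2 using hchoice
  set D₀ : Fin n → Fin m → ℕ := fun i j => if i = i₂ then 0 else u i j with hD₀
  set E₀ : Fin n → Fin m → ℕ := fun i j => H i j - D₀ i j with hE₀
  have hD₀le : ∀ i j, D₀ i j ≤ H i j := by
    intro i j
    by_cases hi : i = i₂
    · simp [hD₀, hi]
    · simp only [hD₀, if_neg hi]
      exact hu1 i j
  have hsum₀ : ∀ i j, D₀ i j + E₀ i j = H i j := by
    intro i j
    have := hD₀le i j
    simp only [hE₀]
    omega
  have hD₀i₂ : ∀ j, D₀ i₂ j = 0 := by intro j; rw [hD₀]; simp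
  have hD₀row : ∀ i, rsum D₀ i ≤ c i := by
    intro i
    by_cases hi : i = i₂
    · subst hi
      have : rsum D₀ i = 0 := Finset.sum_eq_zero fun j _ => hD₀i₂ j
      omega
    · have : rsum D₀ i = ∑ j, u i j := by
        unfold rsum; apply Finset.sum_congr rfl; intro j _; rw [hD₀]; simp [hi]
      rw [this, hu2 i]
      exact min_le_left _ _
  have hE₀row : ∀ i, rsum E₀ i ≤ c i := by
    intro i
    have hsplit : rsum D₀ i + rsum E₀ i = rsum H i := by
      unfold rsum; rw [← Finset.sum_add_distrib]
      exact Finset.sum_congr rfl fun j _ => hsum₀ i j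
    by_cases hi : i = i₂
    · subst hi
      have hz : rsum D₀ i = 0 := Finset.sum_eq_zero fun j _ => hD₀i₂ j
      have hA0 : rsum A i = 0 := Finset.sum_eq_zero fun j _ => hAi₂ j
      have := hHrow i
      have := hBrow i
      omega
    · have hDr : rsum D₀ i = min (c i) (rsum H i) := by
        have : rsum D₀ i = ∑ j, u i j := by
          unfold rsum; apply Finset.sum_congr rfl; intro j _; rw [hD₀]; simp [hi]
        rw [this, hu2 i]
      have := hHrow2 i
      rw [hDr] at hsplit
      omega
  -- induction on potential
  have main : ∀ k (D E : Fin n → Fin m → ℕ),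
      (∀ i j, D i j + E i j = H i j) → (∀ j, D i₂ j = 0) →
      (∀ i, rsum D i ≤ c i) → (∀ i, rsum E i ≤ c i) → Phi q D E ≤ k →
      ∃ D' E', (∀ i j, D' i j + E' i j = A i j + B i j) ∧ (∀ j, D' i₂ j = 0) ∧
        (∀ i, rsum D' i ≤ c i) ∧ (∀ j, csum D' j ≤ q j) ∧
        (∀ i, rsum E' i ≤ c i) ∧ (∀ j, csum E' j ≤ q j) := by
    intro k
    induction k with
    | zero =>
      intro D E hsum hDi₂ hDrow hErow hPhi
      have hzero : ∀ j, (csum D j - q j) + (csum E j - q j) = 0 := by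
        intro j
        have h0 : Phi q D E = 0 := Nat.le_zero.1 hPhi
        unfold Phi at h0
        exact Finset.sum_eq_zero_iff.1 h0 j (mem_univ j)
      refine ⟨D, E, fun i j => hsum i j, hDi₂, hDrow, ?_, hErow, ?_⟩
      · intro j; have := hzero j; omega
      · intro j; have := hzero j; omega
    | succ k ih =>
      intro D E hsum hDi₂ hDrow hErow hPhi
      by_cases hPhi' : Phi q D E ≤ k
      · exact ih D E hsum hDi₂ hDrow hErow hPhi'
      · by_cases hok : ∀ j, csum D j ≤ q j ∧ csum E j ≤ q j
        · refine ⟨D, E, fun i j => hsum i j, hDi₂, hDrow, fun j => (hok j).1, hErow,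
            fun j => (hok j).2⟩
        · push_neg at hok
          obtain ⟨j₀, hj₀⟩ := hok
          by_cases hDover : q j₀ < csum D j₀
          · -- reduce D-excess
            obtain ⟨D', E', hsum', hDrow', hErow', hDi₂', _, hPhiLt⟩ :=
              aug c q i₂ (H := H) hsum hDrow hErow hHcol hDover
                (fun C hC1 hC2 hC3 => stuckD c q i₂
                  (fun i j => hsum i j) hAcol hBrow hDi₂ hDover C hC1 hC2
                  (fun j hj i hi hD => hC3 j hj i hi hD))
            have hDi₂'' : ∀ j, D' i₂ j = 0 := fun j => by rw [hDi₂' j]; exact hDi₂ j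
            exact ih D' E' hsum' hDi₂'' hDrow' hErow' (by omega)
          · have hEover : q j₀ < csum E j₀ := hj₀ (le_of_not_gt hDover)
            obtain ⟨E', D', hsum', hErow', hDrow', hEi₂', hDi₂', hPhiLt⟩ :=
              aug c q i₂ (H := H) (fun i j => by rw [Nat.add_comm]; exact hsum i j)
                hErow hDrow hHcol hEover
                (fun C hC1 hC2 hC3 => stuckE c q i₂ i₁ h12 hcc
                  (fun i j => hsum i j) hAcol hArow hAi₂ hBcol hBrow hBi₁ hDi₂ hEover
                  C hC1 hC2 (fun j hj i hi hE => hC3 j hj i hi hE))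
            have hsum'' : ∀ i j, D' i j + E' i j = H i j := by
              intro i j; rw [Nat.add_comm]; exact hsum' i j
            have hDi₂'' : ∀ j, D' i₂ j = 0 := fun j => by rw [hDi₂' j]; exact hDi₂ j
            have hPhiLt' : Phi q D' E' < Phi q D E := by
              rw [phi_comm q D' E', phi_comm q D E]
              exact hPhiLt
            exact ih D' E' hsum'' hDi₂'' hDrow' hErow' (by omega)
  exact main (Phi q D₀ E₀) D₀ E₀ hsum₀ hD₀i₂ hD₀row hE₀row le_rfl

end Walk
end BSplit


open Finset in
lemma sum_split2 {n : ℕ} {M : Type*} [AddCommMonoid M] (f : Fin n → M) (i₁ i₂ : Fin n)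
    (h12 : i₁ ≠ i₂) :
    ∑ i, f i = (∑ i ∈ (Finset.univ.erase i₁).erase i₂, f i) + f i₂ + f i₁ := by
  rw [← Finset.sum_erase_add Finset.univ f (Finset.mem_univ i₁)]
  congr 1
  rw [← Finset.sum_erase_add (Finset.univ.erase i₁) f
    (Finset.mem_erase.2 ⟨Ne.symm h12, Finset.mem_univ _⟩)]

/-- Given agents `i₁` and `i₂` with `c i₁ ≥ c i₂`, a welfare-maximizing
allocation `M`, and a welfare-maximizing allocation `M₁` among those giving
nothing to agent `i₁`, there is an allocation `D` giving nothing to agent `i₂`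
with `v(D) ≥ v(M₁) + ∑_j M i₂ j · w i₁ j − ∑_j M i₂ j · w i₂ j`. -/
theorem exists_good_allocation_excluding_two {n m : ℕ}
    (c : Fin n → ℕ) (q : Fin m → ℕ) (w : Fin n → Fin m → ℝ)
    (hw : ∀ i j, 0 ≤ w i j)
    (i₁ i₂ : Fin n) (h12 : i₁ ≠ i₂) (hc : c i₂ ≤ c i₁)
    (M : Fin n → Fin m → ℕ) (hM : IsAlloc c q M)
    (hMmax : ∀ a, IsAlloc c q a → allocVal w a ≤ allocVal w M)
    (M₁ : Fin n → Fin m → ℕ) (hM₁ : IsAlloc c q M₁)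
    (hM₁row : ∀ j, M₁ i₁ j = 0)
    (hM₁max : ∀ a, IsAlloc c q a → (∀ j, a i₁ j = 0) →
      allocVal w a ≤ allocVal w M₁) :
    ∃ D : Fin n → Fin m → ℕ, IsAlloc c q D ∧ (∀ j, D i₂ j = 0) ∧
      allocVal w M₁ + (∑ j, (M i₂ j : ℝ) * w i₁ j) -
          (∑ j, (M i₂ j : ℝ) * w i₂ j) ≤ allocVal w D := by
  classical
  set A : Fin n → Fin m → ℕ :=
    fun i j => if i = i₁ then M i₁ j + M i₂ j else if i = i₂ then 0 else M i j with hA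
  have hAapp1 : ∀ j, A i₁ j = M i₁ j + M i₂ j := by intro j; simp [hA]
  have hAapp2 : ∀ j, A i₂ j = 0 := by
    intro j; simp [hA, Ne.symm h12]
  have hAapp3 : ∀ i, i ≠ i₁ → i ≠ i₂ → ∀ j, A i j = M i j := by
    intro i hi1 hi2 j; simp [hA, hi1, hi2]
  have hMrow := hM.1
  have hMcol := hM.2
  have hArow : ∀ i, i ≠ i₁ → BSplit.rsum A i ≤ c i := by
    intro i hi1
    by_cases hi2 : i = i₂
    · subst hi2
      have : BSplit.rsum A i = 0 := Finset.sum_eq_zero fun j _ => hAapp2 j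
      omega
    · have : BSplit.rsum A i = ∑ j, M i j :=
        Finset.sum_congr rfl fun j _ => hAapp3 i hi1 hi2 j
      rw [this]; exact hMrow i
  have hArow1 : BSplit.rsum A i₁ ≤ c i₁ + c i₂ := by
    have h1 : BSplit.rsum A i₁ = (∑ j, M i₁ j) + ∑ j, M i₂ j := by
      unfold BSplit.rsum
      rw [← Finset.sum_add_distrib]
      exact Finset.sum_congr rfl fun j _ => hAapp1 j
    rw [h1]
    exact Nat.add_le_add (hMrow i₁) (hMrow i₂)
  have hAcol : ∀ j, BSplit.csum A j ≤ q j := by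
    intro j
    have h1 : BSplit.csum A j = ∑ i, M i j := by
      unfold BSplit.csum
      rw [sum_split2 (fun i => A i j) i₁ i₂ h12, sum_split2 (fun i => M i j) i₁ i₂ h12]
      have h2 : ∑ i ∈ (Finset.univ.erase i₁).erase i₂, A i j
          = ∑ i ∈ (Finset.univ.erase i₁).erase i₂, M i j := by
        apply Finset.sum_congr rfl
        intro i hi
        have hi2 : i ≠ i₂ := Finset.ne_of_mem_erase hi
        have hi1 : i ≠ i₁ := Finset.ne_of_mem_erase (Finset.mem_of_mem_erase hi)
        exact hAapp3 i hi1 hi2 j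
      rw [h2, hAapp1 j, hAapp2 j]
      omega
    rw [h1]; exact hMcol j
  obtain ⟨D, E, hsum, hDi₂, hDrow, hDcol, hErow, hEcol⟩ :=
    BSplit.split c q i₂ i₁ h12 hc A M₁ hArow hArow1 hAapp2 hAcol hM₁.1 hM₁row hM₁.2
  refine ⟨D, ⟨hDrow, hDcol⟩, hDi₂, ?_⟩
  -- value bookkeeping
  have hEalloc : IsAlloc c q E := ⟨hErow, hEcol⟩
  have hvE : allocVal w E ≤ allocVal w M := hMmax E hEalloc
  have hcomb : ∀ (P Q : Fin n → Fin m → ℕ),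
      allocVal w P + allocVal w Q = ∑ i, ∑ j, ((P i j : ℝ) * w i j + (Q i j : ℝ) * w i j) := by
    intro P Q
    unfold allocVal
    rw [← Finset.sum_add_distrib]
    exact Finset.sum_congr rfl fun i _ => (Finset.sum_add_distrib).symm
  have hvDE : allocVal w D + allocVal w E = allocVal w A + allocVal w M₁ := by
    rw [hcomb D E, hcomb A M₁]
    apply Finset.sum_congr rfl
    intro i _
    apply Finset.sum_congr rfl
    intro j _
    have h := hsum i j
    have h' : (D i j : ℝ) + (E i j : ℝ) = (A i j : ℝ) + (M₁ i j : ℝ) := by exact_mod_cast h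
    rw [← add_mul, ← add_mul, h']
  have hvA : allocVal w A = allocVal w M + (∑ j, (M i₂ j : ℝ) * w i₁ j)
      - ∑ j, (M i₂ j : ℝ) * w i₂ j := by
    unfold allocVal
    rw [sum_split2 (fun i => ∑ j, (A i j : ℝ) * w i j) i₁ i₂ h12,
      sum_split2 (fun i => ∑ j, (M i j : ℝ) * w i j) i₁ i₂ h12]
    have h2 : ∑ i ∈ (Finset.univ.erase i₁).erase i₂, ∑ j, (A i j : ℝ) * w i j
        = ∑ i ∈ (Finset.univ.erase i₁).erase i₂, ∑ j, (M i j : ℝ) * w i j := by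
      apply Finset.sum_congr rfl
      intro i hi
      have hi2 : i ≠ i₂ := Finset.ne_of_mem_erase hi
      have hi1 : i ≠ i₁ := Finset.ne_of_mem_erase (Finset.mem_of_mem_erase hi)
      exact Finset.sum_congr rfl fun j _ => by rw [hAapp3 i hi1 hi2 j]
    have h3 : ∑ j, (A i₂ j : ℝ) * w i₂ j = 0 := by
      apply Finset.sum_eq_zero
      intro j _
      rw [hAapp2 j]
      simp
    have h4 : ∑ j, (A i₁ j : ℝ) * w i₁ j
        = (∑ j, (M i₁ j : ℝ) * w i₁ j) + ∑ j, (M i₂ j : ℝ) * w i₁ j := by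
      rw [← Finset.sum_add_distrib]
      apply Finset.sum_congr rfl
      intro j _
      rw [hAapp1 j]
      push_cast
      ring
    rw [h2, h3, h4]
    ring
  linarith [hvDE, hvA, hvE]
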